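/- Let λ ∈ Γ_k ⊂ ℝⁿ where Γ_k = {λ : σ_j(λ) > 0 for j = 1,…,k} and 1 ≤ k ≤ n. Then for every i ∈ {1,…,n}, λ_i > −δ·(λ_1 + ⋯ + λ_n) with δ = (n−k)/(n(k−1)) (for k ≥ 2). Equivalently, Γ_k ⊆ Σ_δ where Σ_δ = {λ ∈ ℝⁿ : λ_i > −δ ∑_j λ_j for all i}. -/

import Mathlib

open Set Filter

/-- The `j`-th elementary symmetric polynomial of `l : Fin n → ℝ`. -/
noncomputable def esymm (n j : ℕ) (l : Fin n → ℝ) : ℝ :=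
  ∑ s ∈ Finset.powersetCard j (Finset.univ : Finset (Fin n)), ∏ i ∈ s, l i

/-- The Gårding cone `Γ_k = {λ : σ_j(λ) > 0, j = 1, …, k}`. -/
def GammaCone (n k : ℕ) : Set (Fin n → ℝ) :=
  {l | ∀ j : ℕ, 1 ≤ j → j ≤ k → 0 < esymm n j l}

namespace NK
open Polynomial

lemma esymm_zero' (s : Multiset ℝ) : s.esymm 0 = 1 := by
  simp [Multiset.esymm]

lemma esymm_of_lt {s : Multiset ℝ} {j : ℕ} (h : Multiset.card s < j) : s.esymm j = 0 := by
  simp [Multiset.esymm, Multiset.powersetCard_eq_empty _ h]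

lemma esymm_cons (a : ℝ) (s : Multiset ℝ) (j : ℕ) :
    (a ::ₘ s).esymm (j + 1) = s.esymm (j + 1) + a * s.esymm j := by
  simp only [Multiset.esymm, Multiset.powersetCard_cons, Multiset.map_add, Multiset.sum_add,
    Multiset.map_map, Function.comp_def, Multiset.prod_cons]
  rw [← Multiset.sum_map_mul_left]

lemma esymm_one' (s : Multiset ℝ) : s.esymm 1 = s.sum := by
  simp [Multiset.esymm, Multiset.powersetCard_one, Multiset.map_map, Function.comp_def]

noncomputable def PP (s : Multiset ℝ) : ℝ[X] := (s.map fun x => X + C x).prod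

lemma PP_monic (s : Multiset ℝ) : (PP s).Monic := by
  exact monic_multiset_prod_of_monic s _ (fun x _ => monic_X_add_C x)

lemma PP_natDegree (s : Multiset ℝ) : (PP s).natDegree = Multiset.card s := by
  rw [PP, natDegree_multiset_prod_of_monic]
  · rw [Multiset.map_map]
    have : ∀ x ∈ s, (natDegree ∘ fun x => X + C x) x = 1 := fun x _ => natDegree_X_add_C x
    rw [Multiset.map_congr rfl this]
    simp
  · intro p hp
    obtain ⟨x, _, rfl⟩ := Multiset.mem_map.mp hp
    exact monic_X_add_C x

lemma PP_coeff (s : Multiset ℝ) {j : ℕ} (h : j ≤ Multiset.card s) :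
    (PP s).coeff (Multiset.card s - j) = s.esymm j := by
  rw [PP, Multiset.prod_X_add_C_coeff s (Nat.sub_le _ _)]
  congr 1
  omega

lemma taylor_PP (t : ℝ) (s : Multiset ℝ) :
    taylor t (PP s) = PP (s.map (· + t)) := by
  induction s using Multiset.induction with
  | empty => simp [PP, taylor_one]
  | cons a s ih =>
    simp only [PP, Multiset.map_cons, Multiset.prod_cons] at *
    rw [taylor_mul, ih, taylor_apply, add_comp, X_comp, C_comp]
    rw [show X + C t + C a = X + C (a + t) by rw [map_add]; ring]

/-- evaluation of the Hasse derivative gives the shifted esymm -/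

lemma eval_hasseDeriv (s : Multiset ℝ) {j : ℕ} (h : j ≤ Multiset.card s) (t : ℝ) :
    (hasseDeriv (Multiset.card s - j) (PP s)).eval t = (s.map (· + t)).esymm j := by
  rw [← taylor_coeff t (PP s) (Multiset.card s - j), taylor_PP]
  have hc : Multiset.card (s.map (· + t)) = Multiset.card s := Multiset.card_map _ _
  have := PP_coeff (s.map (· + t)) (j := j) (by omega)
  rw [hc] at this
  exact this

lemma map_add_zero (s : Multiset ℝ) : s.map (· + 0) = s := by
  rw [show ((· + 0) : ℝ → ℝ) = id by funext x; simp, Multiset.map_id]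

lemma hasDerivAt_shift (s : Multiset ℝ) {j : ℕ} (h : j + 1 ≤ Multiset.card s) (t : ℝ) :
    HasDerivAt (fun u => (s.map (· + u)).esymm (j + 1))
      ((Multiset.card s - j : ℕ) * (s.map (· + t)).esymm j) t := by
  set m := Multiset.card s with hm
  have hfun : (fun u => (s.map (· + u)).esymm (j + 1)) =
      fun u => (hasseDeriv (m - (j+1)) (PP s)).eval u := by
    funext u; rw [eval_hasseDeriv s h u]
  rw [hfun]
  have e1 : 1 + (m - (j+1)) = m - j := by omega
  have hD : derivative (hasseDeriv (m - (j+1)) (PP s)) = (m - j : ℕ) • hasseDeriv (m - j) (PP s) := by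
    have h2 := congrArg (fun F => F (PP s)) (hasseDeriv_comp (R := ℝ) 1 (m - (j+1)))
    simp only [LinearMap.comp_apply, hasseDeriv_one', LinearMap.smul_apply] at h2
    simp only [e1, Nat.choose_one_right] at h2
    exact h2
  have h0 := Polynomial.hasDerivAt (hasseDeriv (m - (j+1)) (PP s)) t
  rw [hD] at h0
  have e2 := eval_hasseDeriv s (le_trans (Nat.le_succ j) h) t
  rw [← hm] at e2
  simpa [e2, nsmul_eq_mul] using h0

lemma shift_pos {s : Multiset ℝ} {K : ℕ} (hK : K ≤ Multiset.card s)
    (hpos : ∀ i, 1 ≤ i → i ≤ K → 0 < s.esymm i) :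
    ∀ j ≤ K, ∀ t, 0 ≤ t → 0 < (s.map (· + t)).esymm j := by
  intro j
  induction j with
  | zero => intro _ t _; rw [esymm_zero']; norm_num
  | succ j ih =>
    intro hjK t ht
    have hj1 : j + 1 ≤ Multiset.card s := le_trans hjK hK
    have key : ∀ u ∈ interior (Set.Ici (0:ℝ)),
        0 < deriv (fun u => (s.map (· + u)).esymm (j + 1)) u := by
      intro u hu
      rw [interior_Ici] at hu
      rw [(hasDerivAt_shift s hj1 u).deriv]
      have h1 : (0:ℝ) < (Multiset.card s - j : ℕ) := by
        have : 1 ≤ Multiset.card s - j := by omega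
        exact_mod_cast Nat.lt_of_lt_of_le Nat.zero_lt_one this
      exact mul_pos h1 (ih (by omega) u (le_of_lt hu))
    have hmono : MonotoneOn (fun u => (s.map (· + u)).esymm (j + 1)) (Set.Ici 0) := by
      apply monotoneOn_of_deriv_nonneg (convex_Ici 0)
      · exact Continuous.continuousOn (by
          have : (fun u => (s.map (· + u)).esymm (j + 1)) =
              fun u => (hasseDeriv (Multiset.card s - (j+1)) (PP s)).eval u := by
            funext u; rw [eval_hasseDeriv s hj1 u]
          rw [this]; exact Polynomial.continuous _)
      · intro u hu
        exact ((hasDerivAt_shift s hj1 u).differentiableAt).differentiableWithinAt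
      · intro u hu; exact le_of_lt (key u hu)
    have h0 : (0:ℝ) ∈ Set.Ici (0:ℝ) := Set.self_mem_Ici
    have := hmono h0 (Set.mem_Ici.mpr ht) ht
    have hbase : 0 < (s.map (· + (0:ℝ))).esymm (j+1) := by
      rw [map_add_zero]; exact hpos (j+1) (by omega) hjK
    exact lt_of_lt_of_le hbase this

lemma eventually_shift_pos (s : Multiset ℝ) {k : ℕ} (hk1 : 1 ≤ k) (hk : k ≤ Multiset.card s) :
    ∃ T : ℝ, 0 ≤ T ∧ ∀ t, T ≤ t → 0 < (s.map (· + t)).esymm k := by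
  set m := Multiset.card s with hm
  set Q := hasseDeriv (m - k) (PP s) with hQ
  have hcoeff : Q.coeff k = (m.choose (m - k) : ℝ) := by
    rw [hQ, Polynomial.hasseDeriv_coeff]
    have h1 : k + (m - k) = m := by omega
    rw [h1]
    have h2 : (PP s).coeff m = 1 := by
      have := PP_coeff s (j := 0) (Nat.zero_le _)
      simpa [esymm_zero'] using this
    rw [h2, mul_one]
  have hchoose : 0 < m.choose (m - k) := Nat.choose_pos (by omega)
  have hQne : Q ≠ 0 := fun h => by
    rw [h, coeff_zero] at hcoeff
    exact absurd hcoeff.symm (by positivity)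
  have hndQ : Q.natDegree = k := by
    apply le_antisymm
    · calc Q.natDegree ≤ (PP s).natDegree - (m - k) := natDegree_hasseDeriv_le _ _
        _ ≤ k := by rw [PP_natDegree]; omega
    · exact le_natDegree_of_ne_zero (by rw [hcoeff]; positivity)
  have hlc : 0 < Q.leadingCoeff := by
    rw [leadingCoeff, hndQ, hcoeff]; positivity
  have hdeg : 0 < Q.degree := by
    rw [degree_eq_natDegree hQne, hndQ]; exact_mod_cast hk1
  have htend := Polynomial.tendsto_atTop_of_leadingCoeff_nonneg Q hdeg (le_of_lt hlc)
  obtain ⟨T, hT⟩ := (htend.eventually_ge_atTop 1).exists_forall_of_atTop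
  refine ⟨max T 0, le_max_right _ _, fun t ht => ?_⟩
  have := hT t (le_trans (le_max_left _ _) ht)
  rw [← eval_hasseDeriv s hk t]
  linarith

lemma rev_lin (r : ℝ) : (X - C r).reverse = 1 - C r * X := by
  have h1 : (X - C r).natDegree = 1 := natDegree_X_sub_C r
  rw [reverse, h1, reflect_sub, ← pow_one (X : ℝ[X]), reflect_monomial,
    ← mul_one (C r), ← pow_zero (X : ℝ[X]), reflect_C_mul_X_pow]
  norm_num [revAt_le]

lemma rev_lin' {r : ℝ} (hr : r ≠ 0) : (X - C r).reverse = C (-r) * (X - C r⁻¹) := by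
  rw [rev_lin, mul_sub, ← C_mul, neg_mul, mul_inv_cancel₀ hr, map_neg, map_neg, map_one]
  ring

lemma reverse_prod_roots (c : ℝ) (hc : c ≠ 0) (t : Multiset ℝ) (h0 : (0:ℝ) ∉ t) :
    (C c * (t.map fun a => X - C a).prod).reverse
      = C (c * (t.map fun a => -a).prod) * ((t.map fun a => a⁻¹).map fun a => X - C a).prod := by
  induction t using Multiset.induction with
  | empty => simp [reverse_C]
  | cons r t ih =>
    have hr : r ≠ 0 := fun h => h0 (by rw [← h]; exact Multiset.mem_cons_self r t)
    have h0' : (0:ℝ) ∉ t := fun h => h0 (Multiset.mem_cons_of_mem h)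
    have hre : C c * ((r ::ₘ t).map fun a => X - C a).prod
        = (C c * (t.map fun a => X - C a).prod) * (X - C r) := by
      rw [Multiset.map_cons, Multiset.prod_cons]; ring
    rw [hre, reverse_mul_of_domain, ih h0', rev_lin' hr]
    simp only [Multiset.map_cons, Multiset.prod_cons, map_mul, map_neg]
    ring

lemma reverse_real_rooted {P : ℝ[X]} (hP : P ≠ 0)
    (hroots : Multiset.card P.roots = P.natDegree) (h0 : P.coeff 0 ≠ 0) :
    P.reverse ≠ 0 ∧ Multiset.card P.reverse.roots = P.reverse.natDegree ∧
      P.reverse.natDegree = P.natDegree := by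
  have hzero : (0:ℝ) ∉ P.roots := by
    intro h
    have := (mem_roots hP).mp h
    rw [IsRoot, ← coeff_zero_eq_eval_zero] at this
    exact h0 this
  have hrevne : P.reverse ≠ 0 := fun h => hP (reverse_eq_zero.mp h)
  have hnd : P.reverse.natDegree = P.natDegree := by
    rw [reverse_natDegree, natTrailingDegree_eq_zero.mpr (Or.inr h0), Nat.sub_zero]
  refine ⟨hrevne, ?_, hnd⟩
  have hlc : P.leadingCoeff ≠ 0 := leadingCoeff_ne_zero.mpr hP
  have hfac := Polynomial.C_leadingCoeff_mul_prod_multiset_X_sub_C hroots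
  have hrev := reverse_prod_roots P.leadingCoeff hlc P.roots hzero
  rw [hfac] at hrev
  have hprodne : (P.roots.map fun a => -a).prod ≠ 0 := by
    apply Multiset.prod_ne_zero
    intro h
    obtain ⟨a, ha, h2⟩ := Multiset.mem_map.mp h
    rw [neg_eq_zero] at h2
    exact hzero (h2 ▸ ha)
  have hcne : P.leadingCoeff * (P.roots.map fun a => -a).prod ≠ 0 := mul_ne_zero hlc hprodne
  rw [show P.reverse.roots = P.roots.map (fun a => a⁻¹) by
    rw [hrev, roots_C_mul _ hcne, roots_multiset_prod_X_sub_C], Multiset.card_map, hnd]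
  exact hroots

lemma quad_disc {P : ℝ[X]} (hP : P ≠ 0) (hroots : Multiset.card P.roots = P.natDegree)
    (hd : P.natDegree = 2) : P.coeff 0 * P.coeff 2 * 4 ≤ (P.coeff 1)^2 := by
  have hfac := Polynomial.C_leadingCoeff_mul_prod_multiset_X_sub_C hroots
  rw [hd] at hroots
  obtain ⟨r, u, hru⟩ := Multiset.card_eq_two.mp hroots
  rw [hru] at hfac
  have hP2 : P = C P.leadingCoeff * (X^2 - C (r+u) * X + C (r*u)) := by
    conv_lhs => rw [← hfac]
    simp only [Multiset.insert_eq_cons, Multiset.map_cons, Multiset.prod_cons,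
      Multiset.map_singleton, Multiset.prod_singleton, map_add, map_mul]
    ring
  set lc := P.leadingCoeff with hlc
  have h0 : P.coeff 0 = lc * (r*u) := by
    rw [hP2]
    simp [coeff_C, coeff_X_pow]
  have h1 : P.coeff 1 = lc * (-(r+u)) := by
    rw [hP2]
    simp [coeff_C, coeff_X_pow]
    try ring
  have h2 : P.coeff 2 = lc := by
    rw [hP2]
    simp [coeff_C, coeff_X_pow]
  rw [h0, h1, h2]
  nlinarith [sq_nonneg (lc * (r - u))]

theorem poly_newton : ∀ (d : ℕ) (P : ℝ[X]), P ≠ 0 → Multiset.card P.roots = P.natDegree →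
    P.natDegree = d → ∀ c : ℕ, 1 ≤ c → c + 1 ≤ d →
    P.coeff (c-1) * P.coeff (c+1) * ((d.choose c : ℕ) : ℝ)^2 ≤
      (P.coeff c)^2 * ((d.choose (c-1) : ℕ) : ℝ) * ((d.choose (c+1) : ℕ) : ℝ) := by
  intro d
  induction d using Nat.strong_induction_on with
  | _ d IH =>
  intro P hP hroots hd c hc1 hcd
  rcases Nat.lt_or_ge d 3 with hd3 | hd3
  · -- then d = 2, c = 1
    have hd2 : d = 2 := by omega
    have hc : c = 1 := by omega
    subst hd2 hc
    have := quad_disc hP hroots hd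
    simp only [Nat.choose_self, Nat.choose_zero_right, Nat.choose_one_right]
    norm_num
    linarith
  · -- d ≥ 3
    have step : ∀ Q : ℝ[X], Q ≠ 0 → Multiset.card Q.roots = Q.natDegree → Q.natDegree = d →
        ∀ c : ℕ, 2 ≤ c → c + 1 ≤ d →
        Q.coeff (c-1) * Q.coeff (c+1) * ((d.choose c : ℕ) : ℝ)^2 ≤
          (Q.coeff c)^2 * ((d.choose (c-1) : ℕ) : ℝ) * ((d.choose (c+1) : ℕ) : ℝ) := by
      intro Q hQ hQroots hQd c hc2 hcd
      obtain ⟨v, rfl⟩ : ∃ v, c = v + 2 := ⟨c - 2, by omega⟩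
      obtain ⟨e, rfl⟩ : ∃ e, d = e + 1 := ⟨d - 1, by omega⟩
      set Q' := derivative Q with hQ'
      have hlead : Q.coeff (e+1) ≠ 0 := by
        rw [← hQd]; exact leadingCoeff_ne_zero.mpr hQ
      have hQ'top : Q'.coeff e = Q.coeff (e+1) * ((e:ℝ)+1) := by
        rw [hQ', coeff_derivative]; try push_cast; try ring
      have hQ'ne : Q' ≠ 0 := by
        intro h
        rw [h, coeff_zero] at hQ'top
        have : ((e:ℝ)+1) ≠ 0 := by positivity
        exact hlead (by
          field_simp at hQ'top
          exact (mul_eq_zero.mp hQ'top.symm).resolve_right this)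
      have hQ'nd : Q'.natDegree = e := by
        apply le_antisymm
        · calc Q'.natDegree ≤ Q.natDegree - 1 := natDegree_derivative_le Q
            _ = e := by omega
        · apply le_natDegree_of_ne_zero
          rw [hQ'top]
          exact mul_ne_zero hlead (by positivity)
      have hQ'roots : Multiset.card Q'.roots = Q'.natDegree := by
        apply le_antisymm (Polynomial.card_roots' Q')
        have h1 := Polynomial.card_roots_le_derivative Q
        rw [hQroots, hQd, ← hQ'] at h1
        omega
      have H := IH e (by omega) Q' hQ'ne hQ'roots hQ'nd (v+1) (by omega) (by omega)
      simp only [Nat.add_sub_cancel] at H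
      -- rewrite derivative coefficients
      have e1 : Q'.coeff v = Q.coeff (v+1) * ((v:ℝ)+1) := by
        rw [hQ', coeff_derivative]; try push_cast; try ring
      have e2 : Q'.coeff (v+1) = Q.coeff (v+2) * ((v:ℝ)+2) := by
        rw [hQ', coeff_derivative]; try push_cast; try ring
      have e3 : Q'.coeff (v+2) = Q.coeff (v+3) * ((v:ℝ)+3) := by
        rw [hQ', coeff_derivative]; try push_cast; try ring
      rw [e1, e2, e3] at H
      -- binomial identities
      have n1 : (v+2) * (e+1).choose (v+2) = (e+1) * e.choose (v+1) := by
        rw [mul_comm ((v:ℕ)+2) _, ← Nat.add_one_mul_choose_eq]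
      have n2 : (v+1) * (e+1).choose (v+1) = (e+1) * e.choose v := by
        rw [mul_comm ((v:ℕ)+1) _, ← Nat.add_one_mul_choose_eq]
      have n3 : (v+3) * (e+1).choose (v+3) = (e+1) * e.choose (v+2) := by
        rw [mul_comm ((v:ℕ)+3) _, ← Nat.add_one_mul_choose_eq]
      have r1 : ((v:ℝ)+2) * (((e+1).choose (v+2) : ℕ) : ℝ) = ((e:ℝ)+1) * ((e.choose (v+1) : ℕ) : ℝ) := by
        exact_mod_cast n1
      have r2 : ((v:ℝ)+1) * (((e+1).choose (v+1) : ℕ) : ℝ) = ((e:ℝ)+1) * ((e.choose v : ℕ) : ℝ) := by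
        exact_mod_cast n2
      have r3 : ((v:ℝ)+3) * (((e+1).choose (v+3) : ℕ) : ℝ) = ((e:ℝ)+1) * ((e.choose (v+2) : ℕ) : ℝ) := by
        exact_mod_cast n3
      simp only [show v+2-1 = v+1 from rfl, show v+2+1 = v+3 from rfl]
      apply le_of_mul_le_mul_right _
        (show (0:ℝ) < ((v:ℝ)+1)*((v:ℝ)+3)*((v:ℝ)+2)^2 by positivity)
      calc Q.coeff (v+1) * Q.coeff (v+3) * (((e+1).choose (v+2) : ℕ) : ℝ)^2 *
              (((v:ℝ)+1)*((v:ℝ)+3)*((v:ℝ)+2)^2)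
          = (Q.coeff (v+1) * ((v:ℝ)+1)) * (Q.coeff (v+3) * ((v:ℝ)+3)) *
              (((v:ℝ)+2) * (((e+1).choose (v+2) : ℕ) : ℝ))^2 := by ring
        _ = (Q.coeff (v+1) * ((v:ℝ)+1)) * (Q.coeff (v+3) * ((v:ℝ)+3)) *
              (((e:ℝ)+1) * ((e.choose (v+1) : ℕ) : ℝ))^2 := by rw [r1]
        _ = (Q.coeff (v+1) * ((v:ℝ)+1)) * (Q.coeff (v+3) * ((v:ℝ)+3)) *
              ((e.choose (v+1) : ℕ) : ℝ)^2 * ((e:ℝ)+1)^2 := by ring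
        _ ≤ (Q.coeff (v+2) * ((v:ℝ)+2))^2 * ((e.choose v : ℕ) : ℝ) * ((e.choose (v+2) : ℕ) : ℝ)
              * ((e:ℝ)+1)^2 := by
            apply mul_le_mul_of_nonneg_right H (by positivity)
        _ = (Q.coeff (v+2))^2 * ((v:ℝ)+2)^2 * ((((e:ℝ)+1) * ((e.choose v : ℕ) : ℝ)) *
              (((e:ℝ)+1) * ((e.choose (v+2) : ℕ) : ℝ))) := by ring
        _ = (Q.coeff (v+2))^2 * ((v:ℝ)+2)^2 * (((((v:ℝ)+1) * (((e+1).choose (v+1) : ℕ) : ℝ))) *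
              ((((v:ℝ)+3) * (((e+1).choose (v+3) : ℕ) : ℝ)))) := by rw [r2, r3]
        _ = (Q.coeff (v+2))^2 * (((e+1).choose (v+1) : ℕ) : ℝ) * (((e+1).choose (v+3) : ℕ) : ℝ) *
              (((v:ℝ)+1)*((v:ℝ)+3)*((v:ℝ)+2)^2) := by ring
    rcases Nat.lt_or_ge c 2 with hc2 | hc2
    · -- c = 1
      have hc : c = 1 := by omega
      subst hc
      by_cases h0 : P.coeff 0 = 0
      · norm_num [h0]
        positivity
      · obtain ⟨hrne, hrroots, hrnd⟩ := reverse_real_rooted hP hroots h0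
        have hrd : P.reverse.natDegree = d := by rw [hrnd, hd]
        have hstep := step P.reverse hrne hrroots hrd (d-1) (by omega) (by omega)
        have hco : ∀ i ≤ d, P.reverse.coeff i = P.coeff (d - i) := by
          intro i hi
          rw [coeff_reverse, revAt_le (by omega : i ≤ P.natDegree), hd]
        rw [hco (d-1-1) (by omega), hco (d-1+1) (by omega), hco (d-1) (by omega)] at hstep
        have i1 : d - (d-1-1) = 2 := by omega
        have i2 : d - (d-1+1) = 0 := by omega
        have i3 : d - (d-1) = 1 := by omega
        rw [i1, i2, i3] at hstep
        have c1 : d.choose (d-1) = d.choose 1 := by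
          rw [show d - 1 = d - 1 from rfl, Nat.choose_symm (by omega : 1 ≤ d)]
        have c2 : d.choose (d-1-1) = d.choose 2 := by
          rw [show d-1-1 = d - 2 by omega, Nat.choose_symm (by omega : 2 ≤ d)]
        have c3 : d.choose (d-1+1) = d.choose 0 := by
          rw [show d-1+1 = d - 0 by omega, Nat.choose_symm (by omega : 0 ≤ d)]
        rw [c1, c2, c3] at hstep
        norm_num at hstep ⊢
        nlinarith [hstep]
    · exact step P hP hroots hd c hc2 hcd

theorem newton_ms (s : Multiset ℝ) (j : ℕ) (hj : 1 ≤ j) (hjm : j + 1 ≤ Multiset.card s) :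
    s.esymm (j-1) * s.esymm (j+1) * (((Multiset.card s).choose j : ℕ) : ℝ)^2 ≤
      (s.esymm j)^2 * (((Multiset.card s).choose (j-1) : ℕ) : ℝ) *
        (((Multiset.card s).choose (j+1) : ℕ) : ℝ) := by
  set m := Multiset.card s with hm
  have hPfac : PP s = ((s.map fun x => -x).map fun a => X - C a).prod := by
    rw [PP, Multiset.map_map]
    apply congrArg
    apply Multiset.map_congr rfl
    intro x _
    simp [sub_neg_eq_add]
  have hPne : PP s ≠ 0 := (monic_multiset_prod_of_monic s _ (fun x _ => monic_X_add_C x)).ne_zero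
  have hProots : Multiset.card (PP s).roots = (PP s).natDegree := by
    rw [hPfac, roots_multiset_prod_X_sub_C, ← hPfac, PP_natDegree, Multiset.card_map]
  have key := poly_newton m (PP s) hPne hProots (PP_natDegree s) (m - j) (by omega) (by omega)
  have e1 : (PP s).coeff (m - j - 1) = s.esymm (j+1) := by
    rw [show m - j - 1 = m - (j+1) by omega]; exact PP_coeff s hjm
  have e2 : (PP s).coeff (m - j + 1) = s.esymm (j-1) := by
    rw [show m - j + 1 = m - (j-1) by omega]; exact PP_coeff s (by omega)
  have e3 : (PP s).coeff (m - j) = s.esymm j := by exact PP_coeff s (by omega)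
  have c1 : m.choose (m - j) = m.choose j := Nat.choose_symm (by omega)
  have c2 : m.choose (m - j - 1) = m.choose (j+1) := by
    rw [show m - j - 1 = m - (j+1) by omega]; exact Nat.choose_symm (by omega)
  have c3 : m.choose (m - j + 1) = m.choose (j-1) := by
    rw [show m - j + 1 = m - (j-1) by omega]; exact Nat.choose_symm (by omega)
  rw [e1, e2, e3, c1, c2, c3] at key
  nlinarith [key]

lemma maclaurin (s : Multiset ℝ) : ∀ j : ℕ, j + 1 ≤ Multiset.card s →
    (∀ i, 1 ≤ i → i ≤ j+1 → 0 < s.esymm i) →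
    (Multiset.card s : ℝ) * s.esymm (j+1) * (((Multiset.card s).choose j : ℕ) : ℝ) ≤
      s.esymm 1 * s.esymm j * (((Multiset.card s).choose (j+1) : ℕ) : ℝ) := by
  intro j
  induction j with
  | zero =>
    intro hm _
    apply le_of_eq
    rw [esymm_zero', Nat.choose_zero_right, Nat.choose_one_right]
    push_cast
    ring
  | succ j IH =>
    intro hm hpos
    set m := Multiset.card s with hmdef
    have hB := IH (by omega) (fun i h1 h2 => hpos i h1 (by omega))
    have hA := newton_ms s (j+1) (by omega) (by omega)
    simp only [Nat.add_sub_cancel] at hA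
    have hej : 0 < s.esymm j := by
      rcases Nat.eq_zero_or_pos j with h | h
      · rw [h, esymm_zero']; norm_num
      · exact hpos j h (by omega)
    have hej1 : 0 < s.esymm (j+1) := hpos (j+1) (by omega) (by omega)
    have he1 : 0 < s.esymm 1 := hpos 1 le_rfl (by omega)
    have hcj1 : (0:ℝ) < ((m.choose (j+1) : ℕ) : ℝ) := by
      exact_mod_cast Nat.choose_pos (by omega : j + 1 ≤ m)
    have hcj2 : (0:ℝ) ≤ ((m.choose (j+2) : ℕ) : ℝ) := by positivity
    have hcj : (0:ℝ) ≤ ((m.choose j : ℕ) : ℝ) := by positivity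
    apply le_of_mul_le_mul_right _
      (show (0:ℝ) < s.esymm j * s.esymm (j+1) * ((m.choose (j+1) : ℕ) : ℝ) by positivity)
    calc (m:ℝ) * s.esymm (j+2) * ((m.choose (j+1) : ℕ) : ℝ) *
            (s.esymm j * s.esymm (j+1) * ((m.choose (j+1) : ℕ) : ℝ))
        = (s.esymm j * s.esymm (j+2) * ((m.choose (j+1) : ℕ) : ℝ)^2) *
            ((m:ℝ) * s.esymm (j+1)) := by ring
      _ ≤ ((s.esymm (j+1))^2 * ((m.choose j : ℕ) : ℝ) * ((m.choose (j+2) : ℕ) : ℝ)) *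
            ((m:ℝ) * s.esymm (j+1)) := by
          apply mul_le_mul_of_nonneg_right hA (by positivity)
      _ = ((m:ℝ) * s.esymm (j+1) * ((m.choose j : ℕ) : ℝ)) *
            ((s.esymm (j+1))^2 * ((m.choose (j+2) : ℕ) : ℝ)) := by ring
      _ ≤ (s.esymm 1 * s.esymm j * ((m.choose (j+1) : ℕ) : ℝ)) *
            ((s.esymm (j+1))^2 * ((m.choose (j+2) : ℕ) : ℝ)) := by
          apply mul_le_mul_of_nonneg_right hB (by positivity)
      _ = s.esymm 1 * s.esymm (j+1) * ((m.choose (j+2) : ℕ) : ℝ) *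
            (s.esymm j * s.esymm (j+1) * ((m.choose (j+1) : ℕ) : ℝ)) := by ring

lemma gamma_drop : ∀ (k : ℕ) (s : Multiset ℝ) (a : ℝ),
    (∀ j, 1 ≤ j → j ≤ k → 0 < (a ::ₘ s).esymm j) → k ≤ Multiset.card s + 1 →
    ∀ j, 1 ≤ j → j ≤ k - 1 → 0 < s.esymm j := by
  intro k
  induction k with
  | zero => intro s a h hk j hj1 hj2; omega
  | succ k IH =>
    intro s a hG hk j hj1 hj2
    rcases Nat.eq_zero_or_pos k with hk0 | hkpos
    · omega
    have hGk : ∀ i, 1 ≤ i → i ≤ k → 0 < (a ::ₘ s).esymm i := fun i h1 h2 => hG i h1 (by omega)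
    have hIH := IH s a hGk (by omega)
    rcases Nat.lt_or_ge j k with hjk | hjk
    · exact hIH j hj1 (by omega)
    have hjeq : j = k := by omega
    subst hjeq
    by_contra hneg
    push_neg at hneg
    have hm : j ≤ Multiset.card s := by
      by_contra hmm
      push_neg at hmm
      have h1 := hG (j+1) (by omega) le_rfl
      rw [esymm_of_lt (by rw [Multiset.card_cons]; omega)] at h1
      exact lt_irrefl 0 h1
    set m := Multiset.card s with hmdef
    set g : ℝ → ℝ := fun t => (hasseDeriv (m - j) (PP s)).eval t with hg
    have hgval : ∀ t, g t = (s.map (· + t)).esymm j := fun t => eval_hasseDeriv s hm t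
    obtain ⟨T, hT0, hTpos⟩ := eventually_shift_pos s hj1 hm
    set A := {t : ℝ | 0 ≤ t ∧ g t ≤ 0} with hA
    have hA0 : (0:ℝ) ∈ A := by
      refine ⟨le_rfl, ?_⟩
      rw [hgval 0, map_add_zero]
      exact hneg
    have hbdd : BddAbove A := by
      refine ⟨T, fun t ht => ?_⟩
      by_contra hc
      push_neg at hc
      have := hTpos t (le_of_lt hc)
      rw [← hgval t] at this
      linarith [ht.2]
    have hclosed : IsClosed A := by
      apply IsClosed.inter
      · exact isClosed_le continuous_const continuous_id
      · exact isClosed_le (Polynomial.continuous _) continuous_const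
    have ht1mem : sSup A ∈ A := IsClosed.csSup_mem hclosed ⟨0, hA0⟩ hbdd
    set t1 := sSup A with ht1
    have ht1nonneg : 0 ≤ t1 := ht1mem.1
    have ht1pos : ∀ t, t1 < t → 0 < g t := by
      intro t ht
      by_contra hc
      push_neg at hc
      have : t ∈ A := ⟨le_trans ht1nonneg (le_of_lt ht), hc⟩
      linarith [le_csSup hbdd this]
    have hge : 0 ≤ g t1 := by
      have htends : Filter.Tendsto g (nhdsWithin t1 (Set.Ioi t1)) (nhds (g t1)) :=
        ((Polynomial.continuous _).continuousAt).continuousWithinAt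
      exact ge_of_tendsto htends
        (eventually_nhdsWithin_of_forall (fun x hx => (ht1pos x hx).le))
    have hfzero : g t1 = 0 := le_antisymm ht1mem.2 hge
    set s1 := s.map (· + t1) with hs1
    have hcards1 : Multiset.card s1 = m := Multiset.card_map _ _
    have hek : s1.esymm j = 0 := by rw [← hgval t1]; exact hfzero
    have hG1 : ∀ i, 1 ≤ i → i ≤ j+1 → 0 < ((a + t1) ::ₘ s1).esymm i := by
      intro i h1 h2
      have hcons : ((a ::ₘ s).map (· + t1)) = (a + t1) ::ₘ s1 := by
        rw [Multiset.map_cons]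
      rw [← hcons]
      apply shift_pos (s := a ::ₘ s) (K := j+1) (by rw [Multiset.card_cons]; omega) hG i h2 t1
        ht1nonneg
    have hIH1 := IH s1 (a + t1) (fun i h1 h2 => hG1 i h1 (by omega)) (by omega)
    have hekm1 : 0 < s1.esymm (j-1) := by
      rcases Nat.eq_or_lt_of_le hj1 with h | h
      · rw [show j - 1 = 0 by omega, esymm_zero']; norm_num
      · exact hIH1 (j-1) (by omega) (by omega)
    have hnonpos : s1.esymm (j+1) ≤ 0 := by
      rcases Nat.lt_or_ge m (j+1) with hlt | hge2
      · rw [esymm_of_lt (by rw [hcards1]; omega)]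
      · have hN := newton_ms s1 j hj1 (by rw [hcards1]; omega)
        rw [hek, hcards1] at hN
        norm_num at hN
        have hCpos : (0:ℝ) < ((m.choose j : ℕ) : ℝ) := by
          exact_mod_cast Nat.choose_pos hm
        by_contra hc
        push_neg at hc
        have hpos2 : 0 < s1.esymm (j-1) * s1.esymm (j+1) * ((m.choose j : ℕ) : ℝ)^2 :=
          mul_pos (mul_pos hekm1 hc) (pow_pos hCpos 2)
        linarith
    have hcontr := hG1 (j+1) (by omega) le_rfl
    rw [show j + 1 = (j) + 1 from rfl, esymm_cons, hek, mul_zero, add_zero] at hcontr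
    linarith

lemma assemble {nR kR c1 c2 a σ1 A ek : ℝ}
    (hk2 : 2 ≤ kR) (hkn : kR ≤ nR)
    (hc1 : 0 < c1) (hA : 0 < A)
    (hbin : kR * c2 = (nR - kR) * c1)
    (hmac : (nR - 1) * ek * c1 ≤ (σ1 - a) * A * c2)
    (hekM : 0 < ek + a * A) :
    -((nR - kR) * σ1) < a * (nR * (kR - 1)) := by
  have hkR : 0 < kR := by linarith
  have h3 : 0 < ((nR - 1) * c1 * a + (σ1 - a) * c2) * A := by
    nlinarith [mul_pos (mul_pos (show (0:ℝ) < nR - 1 by linarith) hc1) hekM]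
  have P1 : 0 < (nR - 1) * c1 * a + (σ1 - a) * c2 := by
    by_contra hc
    push_neg at hc
    nlinarith [mul_nonpos_of_nonpos_of_nonneg hc hA.le]
  have h4 : 0 < kR * ((nR - 1) * c1 * a + (σ1 - a) * c2) := mul_pos hkR P1
  have h6 : kR * ((nR-1) * c1 * a + (σ1 - a) * c2)
      = (kR*(nR-1)*a + (σ1-a)*(nR-kR)) * c1 := by linear_combination (σ1 - a) * hbin
  rw [h6] at h4
  have Q : 0 < kR*(nR-1)*a + (σ1-a)*(nR-kR) := by
    by_contra hc
    push_neg at hc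
    nlinarith [mul_nonpos_of_nonpos_of_nonneg hc hc1.le]
  nlinarith [Q]

end NK

/-- `Γ_k ⊆ Σ_δ` with `δ = (n-k)/(n(k-1))`: every `λ ∈ Γ_k` satisfies
`λ_i > -δ ∑_j λ_j` for all `i`. -/
theorem stmt4 (n k : ℕ) (hk : 2 ≤ k) (hkn : k ≤ n) (l : Fin n → ℝ)
    (hl : l ∈ GammaCone n k) :
    ∀ i : Fin n, -(((n : ℝ) - k) / (n * ((k : ℝ) - 1))) * (∑ j, l j) < l i := by
  intro i
  have hM : ∀ j : ℕ, 1 ≤ j → j ≤ k → 0 < ((Finset.univ.val.map l).esymm j) := by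
    intro j h1 h2
    have := hl j h1 h2
    rwa [esymm, ← Finset.esymm_map_val] at this
  set a : ℝ := l i with ha
  set s : Multiset ℝ := ((Finset.univ.erase i).val.map l) with hs
  have hsplit : (Finset.univ.val.map l) = a ::ₘ s := by
    rw [hs, Finset.erase_val]
    have h1 : (Finset.univ : Finset (Fin n)).val = i ::ₘ (Finset.univ.val.erase i) :=
      (Multiset.cons_erase (Finset.mem_def.mp (Finset.mem_univ i))).symm
    conv_lhs => rw [h1]
    rw [Multiset.map_cons]
  have hcard : Multiset.card s = n - 1 := by
    rw [hs, Multiset.card_map, ← Finset.card_def, Finset.card_erase_of_mem (Finset.mem_univ i),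
      Finset.card_univ, Fintype.card_fin]
  have hn1 : 1 ≤ n := by omega
  have hG : ∀ j : ℕ, 1 ≤ j → j ≤ k → 0 < ((a ::ₘ s).esymm j) := by
    intro j h1 h2
    rw [← hsplit]; exact hM j h1 h2
  have hsum : (a ::ₘ s).esymm 1 = ∑ j, l j := by
    rw [NK.esymm_one', ← hsplit]
    rfl
  set σ1 : ℝ := ∑ j, l j with hσ
  have hσ1 : 0 < σ1 := by rw [← hsum]; exact hG 1 (by omega) (by omega)
  have hdrop := NK.gamma_drop k s a hG (by omega)
  have hekm1 : 0 < s.esymm (k-1) := hdrop (k-1) (by omega) le_rfl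
  have hekM : 0 < (a ::ₘ s).esymm k := hG k (by omega) le_rfl
  have hcons : (a ::ₘ s).esymm k = s.esymm k + a * s.esymm (k-1) := by
    have h := NK.esymm_cons a s (k-1)
    rwa [show (k-1)+1 = k by omega] at h
  rw [hcons] at hekM
  have hkR : (0:ℝ) < (k:ℝ) := by exact_mod_cast Nat.lt_of_lt_of_le Nat.zero_lt_one (by omega)
  have hnR : (0:ℝ) < (n:ℝ) := by exact_mod_cast Nat.lt_of_lt_of_le Nat.zero_lt_one (by omega)
  have hkn' : (k:ℝ) ≤ (n:ℝ) := by exact_mod_cast hkn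
  have hk2R : (2:ℝ) ≤ (k:ℝ) := by exact_mod_cast hk
  have hden : (0:ℝ) < (n:ℝ) * ((k:ℝ) - 1) := by nlinarith
  rw [show -(((n:ℝ) - (k:ℝ)) / ((n:ℝ) * ((k:ℝ) - 1))) * σ1
      = (-(((n:ℝ) - (k:ℝ)) * σ1)) / ((n:ℝ) * ((k:ℝ) - 1)) by ring,
    div_lt_iff₀ hden]
  rcases le_or_gt (s.esymm k) 0 with hcase | hcase
  · have haprod : 0 < a * s.esymm (k-1) := by linarith
    have hapos : 0 < a := by
      by_contra hna
      push_neg at hna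
      nlinarith [mul_nonpos_of_nonpos_of_nonneg hna hekm1.le]
    nlinarith [mul_pos hapos hden, mul_nonneg (sub_nonneg.mpr hkn') hσ1.le]
  · set m : ℕ := Multiset.card s with hm
    have hkm : k ≤ m := by
      by_contra hc
      push_neg at hc
      rw [NK.esymm_of_lt hc] at hcase
      exact lt_irrefl 0 hcase
    have hpos : ∀ i', 1 ≤ i' → i' ≤ (k-1)+1 → 0 < s.esymm i' := by
      intro i' h1 h2
      rcases Nat.lt_or_ge i' k with h | h
      · exact hdrop i' h1 (by omega)
      · rw [show i' = k by omega]; exact hcase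
    have hmac := NK.maclaurin s (k-1) (by omega) hpos
    rw [show (k-1)+1 = k by omega, ← hm] at hmac
    set c1 : ℝ := ((m.choose (k-1) : ℕ) : ℝ) with hc1def
    set c2 : ℝ := ((m.choose k : ℕ) : ℝ) with hc2def
    have hc1 : (0:ℝ) < c1 := by
      rw [hc1def]; exact_mod_cast Nat.choose_pos (by omega : k - 1 ≤ m)
    have he1s : s.esymm 1 = σ1 - a := by
      have h1 : (a ::ₘ s).esymm 1 = s.esymm 1 + a := by
        rw [show (1:ℕ) = 0 + 1 from rfl, NK.esymm_cons, NK.esymm_zero', mul_one]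
      have h2 := hsum
      rw [h1] at h2
      linarith
    rw [he1s] at hmac
    have hbinnat : m.choose k * k = m.choose (k-1) * (n - k) := by
      have h := Nat.choose_succ_right_eq m (k-1)
      rw [show k-1+1 = k by omega] at h
      rw [h, show m - (k-1) = n - k by omega]
    have hbin : (k:ℝ) * c2 = ((n:ℝ) - (k:ℝ)) * c1 := by
      have h2 : ((m.choose k * k : ℕ):ℝ) = ((m.choose (k-1) * (n-k) : ℕ):ℝ) := by
        exact_mod_cast congrArg (fun x : ℕ => (x:ℝ)) hbinnat
      push_cast [Nat.cast_sub hkn] at h2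
      rw [hc1def, hc2def]
      linarith
    have hsub : ((m:ℕ):ℝ) = (n:ℝ) - 1 := by
      rw [hcard]
      push_cast [Nat.cast_sub hn1]
      ring
    rw [hsub] at hmac
    exact NK.assemble hk2R hkn' hc1 hekm1 hbin hmac hekM
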